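/- arXiv:1008.4037 — 2 statements merged into one kernel-verified Lean document; each statement's English description precedes it below -/
import Mathlib

section
/- Let N ≥ 1 and let J_0, J_1, ..., J_N be real numbers. Define the N×N tridiagonal matrix A by A_{ii} = J_{i-1} + J_i, A_{i,i+1} = A_{i+1,i} = -J_i, and A_{ij} = 0 for |i-j| > 1. Then det(A) = Σ_{k=0}^{N} Π_{i=0, i≠k}^{N} J_i. -/
open Finset

/-- The tridiagonal matrix with parameters `J`. -/
def tridiagT (n : ℕ) (J : Fin (n + 1) → ℝ) : Matrix (Fin n) (Fin n) ℝ :=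
  Matrix.of fun k l =>
    if (k : ℕ) = (l : ℕ) then J k.castSucc + J k.succ
    else if (l : ℕ) = (k : ℕ) + 1 then -J k.succ
    else if (k : ℕ) = (l : ℕ) + 1 then -J l.succ
    else 0

/-- The claimed value of the determinant. -/
def tridiagS (n : ℕ) (J : Fin (n + 1) → ℝ) : ℝ :=
  ∑ k : Fin (n + 1), ∏ i ∈ Finset.univ.erase k, J i

lemma erase_univ_eq_map {n : ℕ} (p : Fin (n + 1)) :
    (Finset.univ : Finset (Fin (n + 1))).erase p = Finset.univ.map p.succAboveEmb := by
  conv_lhs => rw [Fin.univ_succAbove n p]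
  rw [Finset.erase_cons]

lemma tridiagS_eq (n : ℕ) (J : Fin (n + 1) → ℝ) :
    tridiagS n J = ∑ k : Fin (n + 1), ∏ i : Fin n, J (k.succAbove i) := by
  unfold tridiagS
  refine Finset.sum_congr rfl fun k _ => ?_
  rw [erase_univ_eq_map, Finset.prod_map]
  rfl

lemma tridiagS_zero (J : Fin 1 → ℝ) : tridiagS 0 J = 1 := by
  simp [tridiagS_eq]

lemma tridiagS_succ (n : ℕ) (J : Fin (n + 2) → ℝ) :
    tridiagS (n + 1) J = (∏ i : Fin (n + 1), J i.succ) + J 0 * tridiagS n (J ∘ Fin.succ) := by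
  rw [tridiagS_eq, tridiagS_eq, Fin.sum_univ_succ]
  rw [Finset.mul_sum]
  congr 1
  refine Finset.sum_congr rfl fun k _ => ?_
  rw [Fin.prod_univ_succ]
  simp [Function.comp]

lemma tridiagT_minor (n : ℕ) (J : Fin (n + 2) → ℝ) :
    (tridiagT (n + 1) J).submatrix Fin.succ Fin.succ = tridiagT n (J ∘ Fin.succ) := by
  ext k l
  simp only [tridiagT, Matrix.submatrix_apply, Matrix.of_apply, Fin.val_succ, Function.comp,
    add_left_inj, Fin.succ_castSucc]

lemma tridiagT_minor2 (m : ℕ) (J : Fin (m + 3) → ℝ) :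
    ((tridiagT (m + 2) J).submatrix Fin.succ ((1 : Fin (m + 2)).succAbove)).submatrix
        ((0 : Fin (m + 1)).succAbove) Fin.succ
      = tridiagT m (J ∘ Fin.succ ∘ Fin.succ) := by
  ext k l
  simp only [tridiagT, Matrix.submatrix_apply, Matrix.of_apply, Fin.succAbove_zero,
    Fin.one_succAbove_succ, Fin.val_succ, Function.comp, add_left_inj, Fin.succ_castSucc]

theorem det_tridiagT : ∀ (n : ℕ) (J : Fin (n + 1) → ℝ), (tridiagT n J).det = tridiagS n J
  | 0, J => by
      simp [tridiagS_zero, Matrix.det_isEmpty]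
  | 1, J => by
      rw [Matrix.det_fin_one, tridiagS_succ, tridiagS_zero]
      simp [tridiagT]
      ring
  | (m + 2), J => by
      have h1 := det_tridiagT (m + 1) (J ∘ Fin.succ)
      have h0 := det_tridiagT m ((J ∘ Fin.succ) ∘ Fin.succ)
      rw [Matrix.det_succ_row_zero, Fin.sum_univ_succ, Fin.sum_univ_succ]
      have tail : ∀ j : Fin m, tridiagT (m + 2) J 0 j.succ.succ = 0 := by
        intro j
        simp [tridiagT]
      rw [Finset.sum_eq_zero (fun j _ => by rw [tail]; ring)]
      have e00 : tridiagT (m + 2) J 0 0 = J 0 + J 1 := by simp [tridiagT]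
      have e01 : tridiagT (m + 2) J 0 (0 : Fin (m + 1)).succ = -J 1 := by simp [tridiagT]
      have hm0 : (tridiagT (m + 2) J).submatrix Fin.succ ((0 : Fin (m + 2)).succAbove)
          = tridiagT (m + 1) (J ∘ Fin.succ) := by
        rw [Fin.succAbove_zero]; exact tridiagT_minor (m + 1) J
      have hB : ((tridiagT (m + 2) J).submatrix Fin.succ
            ((0 : Fin (m + 1)).succ.succAbove)).det
          = -J 1 * (tridiagT m ((J ∘ Fin.succ) ∘ Fin.succ)).det := by
        rw [Fin.succ_zero_eq_one, Matrix.det_succ_column_zero, Fin.sum_univ_succ]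
        have tail2 : ∀ i : Fin m,
            (tridiagT (m + 2) J).submatrix Fin.succ ((1 : Fin (m + 2)).succAbove) i.succ 0
              = 0 := by
          intro i
          simp [tridiagT, Fin.one_succAbove_zero]
        rw [Finset.sum_eq_zero (fun i _ => by rw [tail2]; ring)]
        have eB : (tridiagT (m + 2) J).submatrix Fin.succ ((1 : Fin (m + 2)).succAbove) 0 0
            = -J 1 := by
          simp [tridiagT, Fin.one_succAbove_zero]
        rw [eB, tridiagT_minor2]
        simp only [Fin.val_zero, pow_zero, Function.comp]
        ring_nf
        rfl
      rw [e00, e01, hm0, hB, h1, h0, tridiagS_succ (m + 1) J, tridiagS_succ m (J ∘ Fin.succ)]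
      have prodid : (∏ i : Fin (m + 2), J i.succ)
          = J 1 * ∏ i : Fin (m + 1), J i.succ.succ := by
        rw [Fin.prod_univ_succ]; simp
      simp only [Function.comp, Fin.succ_zero_eq_one, Fin.val_zero, pow_zero, Fin.val_one, pow_one, Fin.val_succ,
        pow_succ, prodid]
      ring

/-- Determinant of the symmetric tridiagonal matrix built from `J_0,…,J_N`:
`det A = ∑_{k=0}^N ∏_{i≠k} J_i`. -/
theorem tridiag_det (N : ℕ) (hN : 1 ≤ N) (J : Fin (N + 1) → ℝ)
    (A : Matrix (Fin N) (Fin N) ℝ)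
    (hA : ∀ k l : Fin N,
      A k l = if k = l then J k.castSucc + J k.succ
        else if (l : ℕ) = (k : ℕ) + 1 then -J k.succ
        else if (k : ℕ) = (l : ℕ) + 1 then -J l.succ
        else 0) :
    A.det = ∑ k : Fin (N + 1), ∏ i ∈ Finset.univ.erase k, J i := by
  have hAT : A = tridiagT N J := by
    ext k l
    rw [hA k l]
    simp only [tridiagT, Matrix.of_apply, Fin.ext_iff]
  rw [hAT, det_tridiagT]
  rfl
end

section
/- Let N ≥ 1 and let J_0, ..., J_N be strictly positive real numbers. Then the N×N tridiagonal matrix A with A_{ii} = J_{i-1} + J_i, A_{i,i+1} = A_{i+1,i} = -J_i, and zeros elsewhere, has strictly positive determinant. -/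
/-- If all `J_i > 0`, the symmetric tridiagonal matrix `A` has positive determinant. -/
theorem tridiag_det_pos (N : ℕ) (hN : 1 ≤ N) (J : Fin (N + 1) → ℝ)
    (hJ : ∀ i, 0 < J i)
    (A : Matrix (Fin N) (Fin N) ℝ)
    (hA : ∀ k l : Fin N,
      A k l = if k = l then J k.castSucc + J k.succ
        else if (l : ℕ) = (k : ℕ) + 1 then -J k.succ
        else if (k : ℕ) = (l : ℕ) + 1 then -J l.succ
        else 0) :
    0 < A.det := by
  classical
  set c : Fin (N+1) → Fin N → ℝ := fun j k =>
    (if (k : ℕ) = (j : ℕ) then (1:ℝ) else 0) - (if (k : ℕ) + 1 = (j : ℕ) then 1 else 0)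
    with hc
  set M : Matrix (Fin (N+1)) (Fin N) ℝ := fun j k => Real.sqrt (J j) * c j k with hM
  have hprod : ∀ j k l, M j k * M j l = J j * (c j k * c j l) := by
    intro j k l
    have h : Real.sqrt (J j) * Real.sqrt (J j) = J j :=
      Real.mul_self_sqrt (hJ j).le
    simp only [hM]
    rw [mul_mul_mul_comm, h]
  have hcform : ∀ (j : Fin (N+1)) (k : Fin N),
      c j k = (if j = k.castSucc then (1:ℝ) else 0) - (if j = k.succ then 1 else 0) := by
    intro j k
    simp only [hc]
    congr 1
    · by_cases h : (k : ℕ) = (j : ℕ)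
      · rw [if_pos h, if_pos (by ext; simp [h.symm])]
      · rw [if_neg h, if_neg (fun hh => h (by rw [hh]; simp))]
    · by_cases h : (k : ℕ) + 1 = (j : ℕ)
      · rw [if_pos h, if_pos (by ext; simp [h.symm])]
      · rw [if_neg h, if_neg (fun hh => h (by rw [hh]; simp))]
  have hAM : A = Matrix.transpose M * M := by
    ext k l
    rw [Matrix.mul_apply]
    simp only [Matrix.transpose_apply]
    have h1 : ∀ j, M j k * M j l = J j * (c j k * c j l) := fun j => hprod j k l
    rw [Finset.sum_congr rfl fun j _ => h1 j]
    have expand : ∀ j : Fin (N+1), J j * (c j k * c j l) =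
        (J j * c j k) * (if j = l.castSucc then (1:ℝ) else 0)
          - (J j * c j k) * (if j = l.succ then 1 else 0) := by
      intro j; rw [hcform j l]; ring
    rw [Finset.sum_congr rfl fun j _ => expand j, Finset.sum_sub_distrib]
    simp only [mul_ite, mul_one, mul_zero, Finset.sum_ite_eq', Finset.mem_univ, if_true]
    rw [hA k l]
    simp only [hc, Fin.coe_castSucc, Fin.val_succ]
    by_cases hkl : k = l
    · subst hkl
      rw [if_pos rfl, if_pos rfl, if_neg (by omega), if_neg (by omega), if_pos rfl]
      ring
    · have hkl' : (k : ℕ) ≠ (l : ℕ) := fun h => hkl (Fin.ext h)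
      rw [if_neg hkl]
      by_cases h1 : (l : ℕ) = (k : ℕ) + 1
      · rw [if_pos h1, if_neg (by omega), if_pos (by omega), if_neg (by omega),
          if_neg (by omega)]
        have h2 : l.castSucc = k.succ := by ext; simp [h1]
        rw [h2]; ring
      · rw [if_neg h1]
        by_cases h2 : (k : ℕ) = (l : ℕ) + 1
        · rw [if_pos h2, if_neg (by omega), if_neg (by omega), if_pos h2,
            if_neg (by omega)]
          ring
        · rw [if_neg h2, if_neg (by omega), if_neg (by omega), if_neg (by omega),
            if_neg (by omega)]
          ring
  -- injectivity of M
  have hinj : ∀ x : Fin N → ℝ, M.mulVec x = 0 → x = 0 := by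
    intro x hx
    have key : ∀ n (hn : n < N), x ⟨n, hn⟩ = 0 := by
      intro n
      induction n with
      | zero =>
        intro hn
        have h0 := congr_fun hx ⟨0, Nat.succ_pos N⟩
        rw [Matrix.mulVec, dotProduct] at h0
        simp only [Pi.zero_apply] at h0
        have hsum : ∀ k : Fin N, M ⟨0, Nat.succ_pos N⟩ k * x k =
            (if k = (⟨0, hn⟩ : Fin N) then Real.sqrt (J ⟨0, Nat.succ_pos N⟩) * x k else 0) := by
          intro k
          simp only [hM, hc]
          by_cases h : k = (⟨0, hn⟩ : Fin N)
          · subst h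
            rw [if_pos rfl, if_pos rfl, if_neg (by omega)]
            ring
          · have h' : (k : ℕ) ≠ 0 := fun hh => h (Fin.ext hh)
            rw [if_neg h', if_neg (by omega), if_neg h]
            ring
        rw [Finset.sum_congr rfl fun k _ => hsum k,
          Finset.sum_ite_eq' Finset.univ (⟨0, hn⟩ : Fin N)
            (fun k => Real.sqrt (J ⟨0, Nat.succ_pos N⟩) * x k)] at h0
        simp only [Finset.mem_univ, if_true] at h0
        rcases mul_eq_zero.mp h0 with h | h
        · exact absurd h (ne_of_gt (Real.sqrt_pos.mpr (hJ _)))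
        · exact h
      | succ m ih =>
        intro hn
        have hj : m + 1 < N + 1 := by omega
        have hm : m < N := by omega
        have h0 := congr_fun hx ⟨m + 1, hj⟩
        rw [Matrix.mulVec, dotProduct] at h0
        simp only [Pi.zero_apply] at h0
        have hsum : ∀ k : Fin N, M ⟨m + 1, hj⟩ k * x k =
            (if k = (⟨m + 1, hn⟩ : Fin N) then Real.sqrt (J ⟨m + 1, hj⟩) * x k else 0)
            - (if k = (⟨m, hm⟩ : Fin N) then Real.sqrt (J ⟨m + 1, hj⟩) * x k else 0) := by
          intro k
          simp only [hM, hc]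
          by_cases h : k = (⟨m + 1, hn⟩ : Fin N)
          · subst h
            rw [if_pos rfl, if_neg (show ¬(m + 1 + 1 = m + 1) by omega), if_pos rfl,
              if_neg (by simp [Fin.ext_iff])]
            ring
          · have h' : (k : ℕ) ≠ m + 1 := fun hh => h (Fin.ext hh)
            rw [if_neg h', if_neg h]
            by_cases h2 : k = (⟨m, hm⟩ : Fin N)
            · subst h2
              rw [if_pos rfl, if_pos rfl]
              ring
            · have h2' : (k : ℕ) ≠ m := fun hh => h2 (Fin.ext hh)
              rw [if_neg (by omega), if_neg h2]
              ring
        rw [Finset.sum_congr rfl fun k _ => hsum k, Finset.sum_sub_distrib,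
          Finset.sum_ite_eq' Finset.univ (⟨m + 1, hn⟩ : Fin N)
            (fun k => Real.sqrt (J ⟨m + 1, hj⟩) * x k),
          Finset.sum_ite_eq' Finset.univ (⟨m, hm⟩ : Fin N)
            (fun k => Real.sqrt (J ⟨m + 1, hj⟩) * x k)] at h0
        simp only [Finset.mem_univ, if_true] at h0
        rw [ih hm, mul_zero, sub_zero] at h0
        rcases mul_eq_zero.mp h0 with h | h
        · exact absurd h (ne_of_gt (Real.sqrt_pos.mpr (hJ _)))
        · exact h
    funext k
    have := key k.val k.isLt
    simpa using this
  rw [hAM]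
  have hposdef : (Matrix.transpose M * M).PosDef := by
    refine Matrix.posDef_iff_dotProduct_mulVec.mpr ⟨?_, ?_⟩
    · have := Matrix.isHermitian_conjTranspose_mul_self M
      simpa using this
    · intro x hx
      have hMx : M.mulVec x ≠ 0 := fun h => hx (hinj x h)
      have heq : dotProduct (star x) ((Matrix.transpose M * M).mulVec x)
          = dotProduct (M.mulVec x) (M.mulVec x) := by
        rw [← Matrix.mulVec_mulVec, Matrix.dotProduct_mulVec, show star x = x from rfl,
          Matrix.vecMul_transpose]
      rw [heq]
      have h1 : dotProduct (M.mulVec x) (M.mulVec x) ≠ 0 := fun h =>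
        hMx (dotProduct_self_eq_zero.mp h)
      have h2 : 0 ≤ dotProduct (M.mulVec x) (M.mulVec x) :=
        Finset.sum_nonneg fun i _ => mul_self_nonneg _
      exact lt_of_le_of_ne h2 (Ne.symm h1)
  exact hposdef.det_pos
end
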